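/- Let a ∈ (0,1/2) and let α, β be positive integers. Then for every x ∈ [a, 1−a], the derivative of the function f_{α,β} : x ↦ (1 − x^α)/(1 − x^β) satisfies |f_{α,β}'(x)| = |(β x^{β−1}(1 − x^α) − α x^{α−1}(1 − x^β))/(1 − x^β)²| ≤ 4/(e·a²·|log(1−a)|). -/

import Mathlib

lemma aux_pow_bound (x : ℝ) (hx0 : 0 ≤ x) (hx1 : x ≤ 1) (n : ℕ) :
    (n : ℝ) * x ^ (n - 1) * (1 - x) ≤ 1 - x ^ n := by
  induction n with
  | zero => simp
  | succ m ih =>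
    have hxm : x ^ m ≤ x ^ (m - 1) := pow_le_pow_of_le_one hx0 hx1 (Nat.sub_le m 1)
    have h1x : 0 ≤ 1 - x := by linarith
    push_cast
    rw [pow_succ]
    nlinarith [pow_nonneg hx0 m, pow_nonneg hx0 (m - 1),
      mul_le_mul_of_nonneg_left hxm (by positivity : (0:ℝ) ≤ (m : ℝ) * (1 - x))]

set_option maxHeartbeats 1000000 in
/-- Uniform derivative bound for `f_{α,β}(x) = (1 − x^α)/(1 − x^β)` on
`[a, 1−a]` with `a ∈ (0,1/2)`: the derivative equals
`(β x^{β−1}(1−x^α) − α x^{α−1}(1−x^β))/(1−x^β)²` and its absolute value is at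
most `4/(e a² |log(1−a)|)`, uniformly in the positive integers `α, β`. -/
theorem deriv_ratio_pow_bound
    (a : ℝ) (ha : a ∈ Set.Ioo (0:ℝ) (1/2))
    (α β : ℕ) (hα : 0 < α) (hβ : 0 < β) :
    ∀ x ∈ Set.Icc a (1 - a),
      HasDerivAt (fun y : ℝ => (1 - y ^ α) / (1 - y ^ β))
        (((β : ℝ) * x ^ (β - 1) * (1 - x ^ α)
            - (α : ℝ) * x ^ (α - 1) * (1 - x ^ β)) / (1 - x ^ β) ^ 2) x ∧
      |((β : ℝ) * x ^ (β - 1) * (1 - x ^ α)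
          - (α : ℝ) * x ^ (α - 1) * (1 - x ^ β)) / (1 - x ^ β) ^ 2| ≤
        4 / (Real.exp 1 * a ^ 2 * |Real.log (1 - a)|) := by
  obtain ⟨ha0, ha2⟩ := ha
  intro x hx
  obtain ⟨hax, hx1a⟩ := hx
  have hx0 : 0 < x := lt_of_lt_of_le ha0 hax
  have hx1 : x < 1 := by linarith
  have hxb : x ^ β ≤ x := by
    calc x ^ β ≤ x ^ 1 := pow_le_pow_of_le_one hx0.le hx1.le hβ
    _ = x := pow_one x
  have hxa : x ^ α ≤ x := by
    calc x ^ α ≤ x ^ 1 := pow_le_pow_of_le_one hx0.le hx1.le hα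
    _ = x := pow_one x
  have hD : a ≤ 1 - x ^ β := by linarith
  have hDa : a ≤ 1 - x ^ α := by linarith
  have hDpos : 0 < 1 - x ^ β := lt_of_lt_of_le ha0 hD
  have hDapos : 0 < 1 - x ^ α := lt_of_lt_of_le ha0 hDa
  have hDne : (1 - x ^ β) ≠ 0 := ne_of_gt hDpos
  constructor
  · have hd := (((hasDerivAt_pow α x).const_sub 1).div
      ((hasDerivAt_pow β x).const_sub 1) hDne)
    exact hd.congr_deriv (by ring)
  · -- the bound
    have k1 : (β : ℝ) * x ^ (β - 1) * (1 - x) ≤ 1 - x ^ β :=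
      aux_pow_bound x hx0.le hx1.le β
    have k2 : (α : ℝ) * x ^ (α - 1) * (1 - x) ≤ 1 - x ^ α :=
      aux_pow_bound x hx0.le hx1.le α
    have hxapow : (0:ℝ) ≤ x ^ α := pow_nonneg hx0.le α
    set B : ℝ := (β : ℝ) * x ^ (β - 1) with hBdef
    set A : ℝ := (α : ℝ) * x ^ (α - 1) with hAdef
    set D : ℝ := 1 - x ^ β with hDdef
    set Da : ℝ := 1 - x ^ α with hDadef
    have hB0 : 0 ≤ B := by positivity
    have hA0 : 0 ≤ A := by positivity
    have hDa1 : Da ≤ 1 := by rw [hDadef]; linarith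
    have h1x : a ≤ 1 - x := by linarith
    have haa : a ^ 2 ≤ (1 - x) * D := by nlinarith
    have hT1 : B * Da * a ^ 2 ≤ D ^ 2 := by
      nlinarith [mul_le_mul_of_nonneg_right
          (mul_le_mul_of_nonneg_right k1 hDapos.le) hDpos.le,
        mul_le_mul_of_nonneg_left haa (mul_nonneg hB0 hDapos.le),
        mul_le_mul_of_nonneg_right hDa1 (sq_nonneg D)]
    have hT2 : A * D * a ^ 2 ≤ D ^ 2 := by
      nlinarith [mul_le_mul_of_nonneg_right k2 (sq_nonneg D),
        mul_le_mul_of_nonneg_left haa (mul_nonneg hA0 hDpos.le),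
        mul_le_mul_of_nonneg_right hDa1 (sq_nonneg D)]
    have hN1 : 0 ≤ B * Da := mul_nonneg hB0 hDapos.le
    have hN2 : 0 ≤ A * D := mul_nonneg hA0 hDpos.le
    have habs : |B * Da - A * D| * a ^ 2 ≤ 2 * D ^ 2 := by
      have hr1 : (B * Da - A * D) * a ^ 2 = B * Da * a ^ 2 - A * D * a ^ 2 := by ring
      have hr2 : -(B * Da - A * D) * a ^ 2 = A * D * a ^ 2 - B * Da * a ^ 2 := by ring
      have hp1 : 0 ≤ B * Da * a ^ 2 := mul_nonneg hN1 (sq_nonneg a)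
      have hp2 : 0 ≤ A * D * a ^ 2 := mul_nonneg hN2 (sq_nonneg a)
      have hDsq : 0 ≤ D ^ 2 := sq_nonneg D
      rcases abs_cases (B * Da - A * D) with ⟨heq, _⟩ | ⟨heq, _⟩ <;> rw [heq]
      · rw [hr1]; linarith
      · rw [hr2]; linarith
    have hstep1 : |(B * Da - A * D) / D ^ 2| ≤ 2 / a ^ 2 := by
      rw [abs_div, abs_of_pos (by positivity : (0:ℝ) < D ^ 2)]
      rw [div_le_div_iff₀ (by positivity) (by positivity)]
      have hr3 : |B * Da - A * D| * a ^ 2 = a ^ 2 * |B * Da - A * D| := by ring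
      linarith [habs, hr3.ge, hr3.le]
    refine hstep1.trans ?_
    have hlogneg : Real.log (1 - a) < 0 :=
      Real.log_neg (by linarith) (by linarith)
    have hL : |Real.log (1 - a)| = -Real.log (1 - a) := abs_of_neg hlogneg
    have hhalf : -Real.log 2 < Real.log (1 - a) := by
      have := Real.log_lt_log (by linarith : (0:ℝ) < 1/2) (by linarith : (1:ℝ)/2 < 1 - a)
      rwa [show (1:ℝ)/2 = 2⁻¹ by norm_num, Real.log_inv] at this
    have hLpos : 0 < |Real.log (1 - a)| := abs_pos.mpr (ne_of_lt hlogneg)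
    have hkey : Real.exp 1 * |Real.log (1 - a)| ≤ 2 := by
      rw [hL]
      have h1 : -Real.log (1 - a) < Real.log 2 := by linarith
      have h2 : Real.exp 1 * Real.log 2 < 2.7182818286 * 0.6931471808 :=
        mul_lt_mul'' Real.exp_one_lt_d9 Real.log_two_lt_d9
          (Real.exp_pos 1).le (Real.log_pos (by norm_num)).le
      have h3 : Real.exp 1 * (-Real.log (1 - a)) ≤ Real.exp 1 * Real.log 2 :=
        mul_le_mul_of_nonneg_left h1.le (Real.exp_pos 1).le
      nlinarith
    rw [div_le_div_iff₀ (by positivity) (by positivity)]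
    nlinarith [mul_le_mul_of_nonneg_right hkey (sq_nonneg a),
      mul_pos (Real.exp_pos 1) hLpos]
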